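/- Let θ ∈ (ℝ/ℤ)∖{0} be rational. Then X_θ ⊆ L_θ, and for every (x,y) ∈ L_θ there exists n ≥ 0 such that F^n(x,y) ∈ X_θ; that is, X_θ is an attracting core of L_θ. -/

import Mathlib

open Set Filter

/-- The circle `ℝ/ℤ`. -/
abbrev 𝕊 := AddCircle (1 : ℝ)

/-- The torus `𝕋 = (ℝ/ℤ) × (ℝ/ℤ)`. -/
abbrev 𝕋 := 𝕊 × 𝕊

/-- The doubling map `τ(x) = 2x` on the circle. -/
noncomputable def dbl : 𝕊 → 𝕊 := fun x => x + x

/-- The doubling map `F(x, y) = (2x, 2y)` on the torus. -/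
noncomputable def F : 𝕋 → 𝕋 := fun p => (p.1 + p.1, p.2 + p.2)

/-- The open arc of `(ℝ/ℤ) ∖ {a, b}` containing `z`, i.e. the connected component of
the complement of `{a, b}` containing `z`. -/
def arcAt (a b z : 𝕊) : Set 𝕊 := connectedComponentIn ({a, b}ᶜ : Set 𝕊) z

/-- The good region `G(a,b)` of a leaf with distinct endpoints `a, b`: the set of pairs
`(x, y)` such that `x` and `y` both lie in the closure of one and the same of the two
open arcs of `(ℝ/ℤ) ∖ {a, b}`. -/
def goodPair (a b : 𝕊) : Set 𝕋 :=
  {p | ∃ z ∈ ({a, b}ᶜ : Set 𝕊),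
        p.1 ∈ closure (arcAt a b z) ∧ p.2 ∈ closure (arcAt a b z)}

/-- The good region `G(S)` of a set `S ⊆ 𝕋`: the intersection of the good regions of
all off-diagonal points of `S`. -/
def good (S : Set 𝕋) : Set 𝕋 :=
  {p | ∀ q ∈ S, q.1 ≠ q.2 → p ∈ goodPair q.1 q.2}

/-- `α ∈ ℝ/ℤ` is periodic under the doubling map. -/
noncomputable def IsPer (α : 𝕊) : Prop := ∃ n > 0, dbl^[n] α = α

/-- The pre-major leaves: `b 0` consists of the two orderings of the major leaf
`{θ/2, (θ+1)/2}`, and `b (i+1) = (F⁻¹(b i) ∩ G(b i)) ∪ b i`. -/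
noncomputable def preSeq (θ : ℝ) : ℕ → Set 𝕋
  | 0 => {(((θ / 2 : ℝ) : 𝕊), (((θ + 1) / 2 : ℝ) : 𝕊)),
          ((((θ + 1) / 2 : ℝ) : 𝕊), ((θ / 2 : ℝ) : 𝕊))}
  | i + 1 => (F ⁻¹' preSeq θ i ∩ good (preSeq θ i)) ∪ preSeq θ i

/-- The set `Pre_θ` of pre-major leaves. -/
noncomputable def Pre (θ : ℝ) : Set 𝕋 := ⋃ i, preSeq θ i

/-- `L_θ`: the set of accumulation points of `Pre_θ` lying off the diagonal. -/
noncomputable def Lset (θ : ℝ) : Set 𝕋 :=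
  {p | AccPt p (Filter.principal (Pre θ)) ∧ p.1 ≠ p.2}

open Classical in
/-- `2⁻¹θ`: the periodic element among `{θ/2, (θ+1)/2}` if `θ` is periodic, and `θ/2`
otherwise. -/
noncomputable def halfTheta (θ : ℝ) : 𝕊 :=
  if IsPer ((θ : ℝ) : 𝕊) then
    (if IsPer ((θ / 2 : ℝ) : 𝕊) then ((θ / 2 : ℝ) : 𝕊) else (((θ + 1) / 2 : ℝ) : 𝕊))
  else ((θ / 2 : ℝ) : 𝕊)

/-- The post-major angle set `P^S_θ = {2⁻¹θ} ∪ {2ⁿθ : n ≥ 0}`. -/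
noncomputable def PS (θ : ℝ) : Set 𝕊 :=
  {halfTheta θ} ∪ {x | ∃ n : ℕ, x = dbl^[n] ((θ : ℝ) : 𝕊)}

/-- `(x, y)` separates `P_θ`: `x ≠ y` and both open arcs of `(ℝ/ℤ) ∖ {x, y}` contain a
point of `P^S_θ`. -/
noncomputable def SepP (θ : ℝ) (p : 𝕋) : Prop :=
  p.1 ≠ p.2 ∧ ∃ u ∈ PS θ, ∃ v ∈ PS θ,
    u ∈ ({p.1, p.2}ᶜ : Set 𝕊) ∧ v ∈ ({p.1, p.2}ᶜ : Set 𝕊) ∧ v ∉ arcAt p.1 p.2 u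

/-- `(x, y)` intersects `P_θ`: `x ∈ P^S_θ` or `y ∈ P^S_θ`. -/
noncomputable def IntP (θ : ℝ) (p : 𝕋) : Prop := p.1 ∈ PS θ ∨ p.2 ∈ PS θ

/-- `X_θ`: the points of `L_θ` which separate or intersect `P_θ`. -/
noncomputable def Xset (θ : ℝ) : Set 𝕋 :=
  {p ∈ Lset θ | SepP θ p ∨ IntP θ p}


/-! ### Auxiliary lemmas -/

section Aux

open Set Filter

lemma pi_eq_iff {r s : ℝ} : (r : 𝕊) = (s : 𝕊) ↔ ∃ k : ℤ, s = r + k := by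
  constructor
  · intro h
    rw [QuotientAddGroup.eq_iff_sub_mem, AddSubgroup.mem_zmultiples_iff] at h
    obtain ⟨k, hk⟩ := h
    rw [zsmul_eq_mul, mul_one] at hk
    exact ⟨-k, by push_cast; linarith⟩
  · rintro ⟨k, rfl⟩
    rw [QuotientAddGroup.eq_iff_sub_mem, AddSubgroup.mem_zmultiples_iff]
    exact ⟨-k, by rw [zsmul_eq_mul, mul_one]; push_cast; ring⟩

lemma pi_add_int (r : ℝ) (k : ℤ) : ((r + k : ℝ) : 𝕊) = (r : 𝕊) :=
  (pi_eq_iff.mpr ⟨k, rfl⟩).symm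

lemma pi_add_one (r : ℝ) : ((r + 1 : ℝ) : 𝕊) = (r : 𝕊) := by
  exact_mod_cast pi_add_int r 1

lemma pi_continuous : Continuous (fun r : ℝ => (r : 𝕊)) := continuous_quotient_mk'

/-- The open arc: image of an open interval on the circle. -/
noncomputable def arcO (α β : ℝ) : Set 𝕊 := (fun r : ℝ => (r : 𝕊)) '' Ioo α β

/-- The closed arc. -/
noncomputable def carc (α β : ℝ) : Set 𝕊 := (fun r : ℝ => (r : 𝕊)) '' Icc α β

lemma exists_lift (z : 𝕊) (α : ℝ) : ∃ t ∈ Ico α (α + 1), (t : 𝕊) = z := by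
  induction z using QuotientAddGroup.induction_on with
  | H r =>
    refine ⟨r - ⌊r - α⌋, ⟨?_, ?_⟩, ?_⟩
    · have := Int.floor_le (r - α); linarith
    · have := Int.lt_floor_add_one (r - α); linarith
    · exact pi_eq_iff.mpr ⟨⌊r - α⌋, by ring⟩

lemma arc_ne {α β : ℝ} (h1 : α < β) (h2 : β < α + 1) {t t' : ℝ}
    (ht : t ∈ Ioo α β) (ht' : t' ∈ Ioo β (α + 1)) : (t : 𝕊) ≠ (t' : 𝕊) := by
  intro h
  obtain ⟨k, hk⟩ := pi_eq_iff.mp h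
  have h0 : (0 : ℝ) < k := by linarith [ht.1, ht.2, ht'.1, ht'.2]
  have h1' : (k : ℝ) < 1 := by linarith [ht.1, ht.2, ht'.1, ht'.2]
  have : (0 : ℤ) < k := by exact_mod_cast h0
  have : k < 1 := by exact_mod_cast h1'
  omega

lemma left_not_mem_arc {α β : ℝ} (h1 : α < β) (h2 : β < α + 1) : (α : 𝕊) ∉ arcO α β := by
  rintro ⟨t, ht, h⟩
  obtain ⟨k, hk⟩ := pi_eq_iff.mp h.symm
  have h0 : (0 : ℝ) < k := by linarith [ht.1, ht.2]
  have h1' : (k : ℝ) < 1 := by linarith [ht.1, ht.2]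
  have : (0 : ℤ) < k := by exact_mod_cast h0
  have : k < 1 := by exact_mod_cast h1'
  omega

lemma right_not_mem_arc {α β : ℝ} (h1 : α < β) (h2 : β < α + 1) : (β : 𝕊) ∉ arcO α β := by
  rintro ⟨t, ht, h⟩
  obtain ⟨k, hk⟩ := pi_eq_iff.mp h.symm
  have h0 : (-1 : ℝ) < k := by linarith [ht.1, ht.2]
  have h1' : (k : ℝ) < 0 := by linarith [ht.1, ht.2]
  have : (-1 : ℤ) < k := by exact_mod_cast h0
  have : k < 0 := by exact_mod_cast h1'
  omega

lemma circle_partition {α β : ℝ} (h1 : α < β) (h2 : β < α + 1) (z : 𝕊) :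
    z = (α : 𝕊) ∨ z = (β : 𝕊) ∨ z ∈ arcO α β ∨ z ∈ arcO β (α + 1) := by
  obtain ⟨t, ⟨htl, htr⟩, rfl⟩ := exists_lift z α
  rcases eq_or_lt_of_le htl with h | h
  · exact Or.inl (by rw [← h])
  rcases lt_trichotomy t β with h' | h' | h'
  · exact Or.inr (Or.inr (Or.inl ⟨t, ⟨h, h'⟩, rfl⟩))
  · exact Or.inr (Or.inl (by rw [h']))
  · exact Or.inr (Or.inr (Or.inr ⟨t, ⟨h', htr⟩, rfl⟩))

lemma compl_pair_eq {α β : ℝ} (h1 : α < β) (h2 : β < α + 1) :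
    ({(α : 𝕊), (β : 𝕊)}ᶜ : Set 𝕊) = arcO α β ∪ arcO β (α + 1) := by
  apply subset_antisymm
  · intro z hz
    simp only [mem_compl_iff, mem_insert_iff, mem_singleton_iff, not_or] at hz
    rcases circle_partition h1 h2 z with h | h | h | h
    · exact absurd h hz.1
    · exact absurd h hz.2
    · exact Or.inl h
    · exact Or.inr h
  · intro z hz
    simp only [mem_compl_iff, mem_insert_iff, mem_singleton_iff, not_or]
    rcases hz with h | h
    · exact ⟨fun e => left_not_mem_arc h1 h2 (e ▸ h), fun e => right_not_mem_arc h1 h2 (e ▸ h)⟩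
    · have hb : α + 1 < β + 1 := by linarith
      constructor
      · intro e
        have : ((α + 1 : ℝ) : 𝕊) ∈ arcO β (α + 1) := by
          rw [pi_add_one α, ← e]; exact h
        exact right_not_mem_arc h2 hb this
      · exact fun e => left_not_mem_arc h2 hb (e ▸ h)

lemma isOpen_arc {α β : ℝ} : IsOpen (arcO α β) :=
  QuotientAddGroup.isOpenMap_coe _ isOpen_Ioo

lemma isPreconnected_arc {α β : ℝ} : IsPreconnected (arcO α β) :=
  isPreconnected_Ioo.image _ pi_continuous.continuousOn

lemma arc_subset_compl {α β : ℝ} (h1 : α < β) (h2 : β < α + 1) :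
    arcO α β ⊆ ({(α : 𝕊), (β : 𝕊)}ᶜ : Set 𝕊) := by
  rw [compl_pair_eq h1 h2]; exact subset_union_left

lemma arc_disjoint {α β : ℝ} (h1 : α < β) (h2 : β < α + 1) :
    Disjoint (arcO α β) (arcO β (α + 1)) := by
  rw [Set.disjoint_left]
  rintro w ⟨t, ht, rfl⟩ ⟨t', ht', he⟩
  exact arc_ne h1 h2 ht ht' he.symm

lemma connectedComponentIn_arc {α β : ℝ} (h1 : α < β) (h2 : β < α + 1) {z : 𝕊}
    (hz : z ∈ arcO α β) :
    connectedComponentIn ({(α : 𝕊), (β : 𝕊)}ᶜ : Set 𝕊) z = arcO α β := by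
  apply subset_antisymm
  · have hsub : connectedComponentIn ({(α : 𝕊), (β : 𝕊)}ᶜ : Set 𝕊) z
        ⊆ arcO α β ∪ arcO β (α + 1) := by
      rw [← compl_pair_eq h1 h2]; exact connectedComponentIn_subset _ _
    refine isPreconnected_connectedComponentIn.subset_left_of_subset_union isOpen_arc isOpen_arc
      (arc_disjoint h1 h2) hsub ⟨z, mem_connectedComponentIn (arc_subset_compl h1 h2 hz), hz⟩
  · exact isPreconnected_arc.subset_connectedComponentIn hz (arc_subset_compl h1 h2)

lemma connectedComponentIn_arc' {α β : ℝ} (h1 : α < β) (h2 : β < α + 1) {z : 𝕊}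
    (hz : z ∈ arcO β (α + 1)) :
    connectedComponentIn ({(α : 𝕊), (β : 𝕊)}ᶜ : Set 𝕊) z = arcO β (α + 1) := by
  have hset : ({(α : 𝕊), (β : 𝕊)} : Set 𝕊) = {(β : 𝕊), ((α + 1 : ℝ) : 𝕊)} := by
    rw [pi_add_one α]; exact Set.pair_comm _ _
  rw [hset]
  exact connectedComponentIn_arc h2 (by linarith) hz

lemma isClosed_carc {α β : ℝ} : IsClosed (carc α β) := by
  have h : IsCompact (carc α β) := isCompact_Icc.image pi_continuous
  exact h.isClosed

lemma closure_arc {α β : ℝ} (h1 : α < β) : closure (arcO α β) = carc α β := by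
  apply subset_antisymm
  · exact closure_minimal (image_mono Ioo_subset_Icc_self) isClosed_carc
  · have : carc α β = (fun r : ℝ => (r : 𝕊)) '' closure (Ioo α β) := by
      rw [closure_Ioo h1.ne]; rfl
    rw [this]
    exact image_closure_subset_closure_image pi_continuous

lemma dbl_pi (r : ℝ) : dbl (r : 𝕊) = ((2 * r : ℝ) : 𝕊) := by
  show (r : 𝕊) + (r : 𝕊) = _
  rw [← AddCircle.coe_add]; norm_num [two_mul]

lemma A_ne_B (θ : ℝ) : ((θ / 2 : ℝ) : 𝕊) ≠ (((θ + 1) / 2 : ℝ) : 𝕊) := by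
  intro h
  obtain ⟨k, hk⟩ := pi_eq_iff.mp h
  have : (2 * k : ℝ) = 1 := by linarith
  have : (2 * k : ℤ) = 1 := by exact_mod_cast this
  omega

lemma halfTheta_cases (θ : ℝ) :
    halfTheta θ = ((θ / 2 : ℝ) : 𝕊) ∨ halfTheta θ = (((θ + 1) / 2 : ℝ) : 𝕊) := by
  unfold halfTheta; split_ifs <;> simp

lemma halfTheta_PS (θ : ℝ) : halfTheta θ ∈ PS θ := Or.inl rfl

lemma theta_PS (θ : ℝ) : ((θ : ℝ) : 𝕊) ∈ PS θ := Or.inr ⟨0, rfl⟩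

lemma dbl_halfTheta (θ : ℝ) : dbl (halfTheta θ) = ((θ : ℝ) : 𝕊) := by
  rcases halfTheta_cases θ with h | h <;> rw [h, dbl_pi]
  · rw [show (2 * (θ / 2) : ℝ) = θ by ring]
  · rw [show (2 * ((θ + 1) / 2) : ℝ) = θ + 1 by ring, pi_add_one]

lemma dbl_preimage_theta {θ : ℝ} {z : 𝕊} (h : dbl z = ((θ : ℝ) : 𝕊)) :
    z = ((θ / 2 : ℝ) : 𝕊) ∨ z = (((θ + 1) / 2 : ℝ) : 𝕊) := by
  induction z using QuotientAddGroup.induction_on with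
  | H r =>
    rw [dbl_pi] at h
    obtain ⟨k, hk⟩ := pi_eq_iff.mp h
    rcases Int.even_or_odd k with ⟨m, hm⟩ | ⟨m, hm⟩
    · left
      exact (pi_eq_iff.mpr ⟨-m, by push_cast [hm] at hk ⊢; linarith⟩).symm
    · right
      exact (pi_eq_iff.mpr ⟨-(m + 1), by push_cast [hm] at hk ⊢; linarith⟩).symm

lemma half_ne_zero : ((1 / 2 : ℝ) : 𝕊) ≠ 0 := by
  intro h
  rw [show (0 : 𝕊) = ((0 : ℝ) : 𝕊) by norm_num] at h
  obtain ⟨k, hk⟩ := pi_eq_iff.mp h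
  have : (2 * k : ℝ) = -1 := by linarith
  have : (2 * k : ℤ) = -1 := by exact_mod_cast this
  omega

lemma dbl_eq_dbl {x y : 𝕊} (h : dbl x = dbl y) : y = x ∨ y = x + ((1 / 2 : ℝ) : 𝕊) := by
  induction x using QuotientAddGroup.induction_on with
  | H r =>
    induction y using QuotientAddGroup.induction_on with
    | H s =>
      rw [dbl_pi, dbl_pi] at h
      obtain ⟨k, hk⟩ := pi_eq_iff.mp h
      rcases Int.even_or_odd k with ⟨m, hm⟩ | ⟨m, hm⟩
      · left
        exact (pi_eq_iff.mpr ⟨m, by push_cast [hm] at hk ⊢; linarith⟩).symm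
      · right
        rw [show (r : 𝕊) + ((1 / 2 : ℝ) : 𝕊) = ((r + 1 / 2 : ℝ) : 𝕊) by rw [AddCircle.coe_add]]
        exact (pi_eq_iff.mpr ⟨m, by push_cast [hm] at hk ⊢; linarith⟩).symm

lemma continuous_F : Continuous F :=
  ((continuous_fst.add continuous_fst).prodMk (continuous_snd.add continuous_snd))

lemma B_shift (θ : ℝ) : (((θ + 1) / 2 : ℝ) : 𝕊) = ((θ / 2 + 1 / 2 : ℝ) : 𝕊) := by
  rw [show ((θ + 1) / 2 : ℝ) = θ / 2 + 1 / 2 by ring]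

lemma base_mem (θ : ℝ) (i : ℕ) :
    ((((θ / 2 : ℝ) : 𝕊), (((θ + 1) / 2 : ℝ) : 𝕊)) : 𝕋) ∈ preSeq θ i := by
  induction i with
  | zero => exact Or.inl rfl
  | succ i ih => exact Set.mem_union_right _ ih

lemma mem_goodPair_of_lifts (θ : ℝ) {p : 𝕋} {s : ℝ}
    (hs : ({((θ / 2 : ℝ) : 𝕊), (((θ + 1) / 2 : ℝ) : 𝕊)} : Set 𝕊) = {(s : 𝕊), ((s + 1 / 2 : ℝ) : 𝕊)})
    (h1 : p.1 ∈ carc s (s + 1 / 2)) (h2 : p.2 ∈ carc s (s + 1 / 2)) :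
    p ∈ goodPair ((θ / 2 : ℝ) : 𝕊) (((θ + 1) / 2 : ℝ) : 𝕊) := by
  have hlt1 : s < s + 1 / 2 := by linarith
  have hlt2 : s + 1 / 2 < s + 1 := by linarith
  have hz : ((s + 1 / 4 : ℝ) : 𝕊) ∈ arcO s (s + 1 / 2) :=
    ⟨s + 1 / 4, ⟨by linarith, by linarith⟩, rfl⟩
  refine ⟨((s + 1 / 4 : ℝ) : 𝕊), ?_, ?_, ?_⟩
  · show _ ∈ ({((θ / 2 : ℝ) : 𝕊), (((θ + 1) / 2 : ℝ) : 𝕊)} : Set 𝕊)ᶜ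
    rw [hs]
    exact arc_subset_compl hlt1 hlt2 hz
  · show p.1 ∈ closure (arcAt _ _ _)
    unfold arcAt
    rw [hs, connectedComponentIn_arc hlt1 hlt2 hz, closure_arc hlt1]
    exact h1
  · show p.2 ∈ closure (arcAt _ _ _)
    unfold arcAt
    rw [hs, connectedComponentIn_arc hlt1 hlt2 hz, closure_arc hlt1]
    exact h2

lemma pair_set_eq (θ : ℝ) :
    ({((θ / 2 : ℝ) : 𝕊), (((θ + 1) / 2 : ℝ) : 𝕊)} : Set 𝕊)
      = {((θ / 2 : ℝ) : 𝕊), ((θ / 2 + 1 / 2 : ℝ) : 𝕊)} := by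
  rw [B_shift]

lemma preSeq_subset_goodPair (θ : ℝ) (i : ℕ) :
    preSeq θ i ⊆ goodPair ((θ / 2 : ℝ) : 𝕊) (((θ + 1) / 2 : ℝ) : 𝕊) := by
  induction i with
  | zero =>
    intro p hp
    have e1 : ((θ / 2 : ℝ) : 𝕊) ∈ carc (θ / 2) (θ / 2 + 1 / 2) :=
      ⟨θ / 2, ⟨le_refl _, by linarith⟩, rfl⟩
    have e2 : (((θ + 1) / 2 : ℝ) : 𝕊) ∈ carc (θ / 2) (θ / 2 + 1 / 2) :=
      ⟨θ / 2 + 1 / 2, ⟨by linarith, le_refl _⟩, (B_shift θ).symm⟩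
    rcases hp with h | h <;> subst h
    · exact mem_goodPair_of_lifts θ (pair_set_eq θ) e1 e2
    · exact mem_goodPair_of_lifts θ (pair_set_eq θ) e2 e1
  | succ i ih =>
    intro p hp
    rcases hp with ⟨_, hgood⟩ | hp
    · exact hgood _ (base_mem θ i) (A_ne_B θ)
    · exact ih hp

lemma Pre_subset_goodPair (θ : ℝ) :
    Pre θ ⊆ goodPair ((θ / 2 : ℝ) : 𝕊) (((θ + 1) / 2 : ℝ) : 𝕊) :=
  Set.iUnion_subset (preSeq_subset_goodPair θ)

/-- The closed "unlinked-with-major-leaf" region. -/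
noncomputable def Creg (θ : ℝ) : Set 𝕋 :=
  (carc (θ / 2) (θ / 2 + 1 / 2)) ×ˢ (carc (θ / 2) (θ / 2 + 1 / 2)) ∪
  (carc (θ / 2 + 1 / 2) (θ / 2 + 1)) ×ˢ (carc (θ / 2 + 1 / 2) (θ / 2 + 1))

lemma goodPair_subset_Creg (θ : ℝ) :
    goodPair ((θ / 2 : ℝ) : 𝕊) (((θ + 1) / 2 : ℝ) : 𝕊) ⊆ Creg θ := by
  rintro p ⟨z, hz, h1, h2⟩
  have hlt1 : θ / 2 < θ / 2 + 1 / 2 := by linarith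
  have hlt2 : θ / 2 + 1 / 2 < θ / 2 + 1 := by linarith
  rw [mem_compl_iff, show ({((θ / 2 : ℝ) : 𝕊), (((θ + 1) / 2 : ℝ) : 𝕊)} : Set 𝕊)
      = {((θ / 2 : ℝ) : 𝕊), ((θ / 2 + 1 / 2 : ℝ) : 𝕊)} from pair_set_eq θ,
    ← mem_compl_iff, compl_pair_eq hlt1 hlt2] at hz
  have harcAt : ∀ w : 𝕊, arcAt ((θ / 2 : ℝ) : 𝕊) (((θ + 1) / 2 : ℝ) : 𝕊) w
      = connectedComponentIn (({((θ / 2 : ℝ) : 𝕊), ((θ / 2 + 1 / 2 : ℝ) : 𝕊)} : Set 𝕊)ᶜ) w := by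
    intro w; unfold arcAt; rw [pair_set_eq θ]
  rcases hz with hz | hz
  · left
    rw [harcAt, connectedComponentIn_arc hlt1 hlt2 hz, closure_arc hlt1] at h1 h2
    exact ⟨h1, h2⟩
  · right
    rw [harcAt, connectedComponentIn_arc' hlt1 hlt2 hz, closure_arc hlt2] at h1 h2
    exact ⟨h1, h2⟩

lemma isClosed_Creg (θ : ℝ) : IsClosed (Creg θ) :=
  ((isClosed_carc.prod isClosed_carc).union (isClosed_carc.prod isClosed_carc))

lemma Lset_subset_Creg (θ : ℝ) : Lset θ ⊆ Creg θ := by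
  intro p hp
  have h1 : p ∈ closure (Pre θ) := mem_closure_iff_clusterPt.mpr (hp.1.clusterPt)
  have h2 : closure (Pre θ) ⊆ Creg θ :=
    closure_minimal (fun q hq => goodPair_subset_Creg θ (Pre_subset_goodPair θ hq))
      (isClosed_Creg θ)
  exact h2 h1

lemma F_image_preSeq (θ : ℝ) (i : ℕ) :
    F '' preSeq θ i ⊆ Pre θ ∪ {((((θ : ℝ) : 𝕊)), (((θ : ℝ) : 𝕊)))} := by
  induction i with
  | zero =>
    rintro q ⟨p, hp, rfl⟩
    right
    have hA : dbl ((θ / 2 : ℝ) : 𝕊) = ((θ : ℝ) : 𝕊) := by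
      rw [dbl_pi, show (2 * (θ / 2) : ℝ) = θ by ring]
    have hB : dbl (((θ + 1) / 2 : ℝ) : 𝕊) = ((θ : ℝ) : 𝕊) := by
      rw [dbl_pi, show (2 * ((θ + 1) / 2) : ℝ) = θ + 1 by ring, pi_add_one]
    rcases hp with h | h <;> subst h
    · simp only [F, mem_singleton_iff, Prod.mk.injEq]; exact ⟨hA, hB⟩
    · simp only [F, mem_singleton_iff, Prod.mk.injEq]; exact ⟨hB, hA⟩
  | succ i ih =>
    rintro q ⟨p, hp, rfl⟩
    rcases hp with ⟨hpre, _⟩ | hp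
    · exact Or.inl (Set.mem_iUnion.mpr ⟨i, hpre⟩)
    · exact ih ⟨p, hp, rfl⟩

lemma F_image_Pre (θ : ℝ) :
    F '' Pre θ ⊆ Pre θ ∪ {((((θ : ℝ) : 𝕊)), (((θ : ℝ) : 𝕊)))} := by
  rintro q ⟨p, hp, rfl⟩
  obtain ⟨i, hi⟩ := Set.mem_iUnion.mp hp
  exact F_image_preSeq θ i ⟨p, hi, rfl⟩

lemma Lset_invariant {θ : ℝ} {p : 𝕋} (hp : p ∈ Lset θ) (hne : (F p).1 ≠ (F p).2) :
    F p ∈ Lset θ := by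
  refine ⟨?_, hne⟩
  rw [accPt_iff_nhds]
  intro U hU
  set pt : 𝕋 := ((((θ : ℝ) : 𝕊)), (((θ : ℝ) : 𝕊))) with hpt
  have hFp_ne_pt : F p ≠ pt := by
    intro h
    apply hne
    rw [h]
  have hU' : U ∩ {pt}ᶜ ∈ nhds (F p) :=
    Filter.inter_mem hU ((isOpen_compl_singleton).mem_nhds hFp_ne_pt)
  set N : Set 𝕋 := {q : 𝕋 | q.1 ≠ p.1 + ((1 / 2 : ℝ) : 𝕊) ∧ q.2 ≠ p.2 + ((1 / 2 : ℝ) : 𝕊)}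
    with hN
  have hNopen : IsOpen N := by
    have : N = (Prod.fst ⁻¹' ({p.1 + ((1 / 2 : ℝ) : 𝕊)}ᶜ : Set 𝕊)) ∩
        (Prod.snd ⁻¹' ({p.2 + ((1 / 2 : ℝ) : 𝕊)}ᶜ : Set 𝕊)) := rfl
    rw [this]
    exact (isOpen_compl_singleton.preimage continuous_fst).inter
      (isOpen_compl_singleton.preimage continuous_snd)
  have hpN : p ∈ N := by
    constructor <;> · intro h; exact half_ne_zero (left_eq_add.mp h)
  have hV : F ⁻¹' (U ∩ {pt}ᶜ) ∩ N ∈ nhds p :=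
    Filter.inter_mem (continuous_F.continuousAt.preimage_mem_nhds hU') (hNopen.mem_nhds hpN)
  obtain ⟨y, ⟨⟨hyU, hyN⟩, hyPre⟩, hyne⟩ := accPt_iff_nhds.mp hp.1 _ hV
  refine ⟨F y, ⟨hyU.1, ?_⟩, ?_⟩
  · rcases F_image_Pre θ ⟨y, hyPre, rfl⟩ with h | h
    · exact h
    · exact absurd h hyU.2
  · intro h
    apply hyne
    have h1 : dbl y.1 = dbl p.1 := congrArg Prod.fst h
    have h2 : dbl y.2 = dbl p.2 := congrArg Prod.snd h
    rcases dbl_eq_dbl h1.symm with e1 | e1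
    · rcases dbl_eq_dbl h2.symm with e2 | e2
      · exact Prod.ext e1 e2
      · exact absurd e2 hyN.2
    · exact absurd e1 hyN.1

lemma carc_cases {α β : ℝ} {w : 𝕊} (hw : w ∈ carc α β) :
    w = (α : 𝕊) ∨ w = (β : 𝕊) ∨ w ∈ arcO α β := by
  obtain ⟨t, ⟨ht1, ht2⟩, rfl⟩ := hw
  rcases eq_or_lt_of_le ht1 with h | h
  · exact Or.inl (by rw [← h])
  rcases eq_or_lt_of_le ht2 with h' | h'
  · exact Or.inr (Or.inl (by rw [h']))
  · exact Or.inr (Or.inr ⟨t, ⟨h, h'⟩, rfl⟩)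

lemma arcO_subset_carc {α β : ℝ} : arcO α β ⊆ carc α β :=
  image_mono Ioo_subset_Icc_self

lemma mem_carc_self_left {α β : ℝ} (h : α ≤ β) : (α : 𝕊) ∈ carc α β :=
  ⟨α, ⟨le_refl _, h⟩, rfl⟩

lemma mem_carc_self_right {α β : ℝ} (h : α ≤ β) : (β : 𝕊) ∈ carc α β :=
  ⟨β, ⟨h, le_refl _⟩, rfl⟩

lemma arc_translate {α β : ℝ} (j : ℤ) : arcO (α + j) (β + j) = arcO α β := by
  apply subset_antisymm
  · rintro _ ⟨t, ht, rfl⟩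
    exact ⟨t - j, ⟨by linarith [ht.1], by linarith [ht.2]⟩,
      pi_eq_iff.mpr ⟨j, by push_cast; ring⟩⟩
  · rintro _ ⟨t, ht, rfl⟩
    exact ⟨t + j, ⟨by linarith [ht.1], by linarith [ht.2]⟩,
      (pi_eq_iff.mpr ⟨j, by push_cast; ring⟩).symm⟩

lemma sep_forall {θ : ℝ} {q : 𝕋} (hne : q.1 ≠ q.2) (hns : ¬ SepP θ q) (hni : ¬ IntP θ q)
    {w0 : 𝕊} (hw0 : w0 ∈ PS θ) (hw0m : w0 ∈ ({q.1, q.2}ᶜ : Set 𝕊)) :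
    ∀ w ∈ PS θ, w ∈ arcAt q.1 q.2 w0 := by
  intro w hw
  have hni1 : q.1 ∉ PS θ := fun h => hni (Or.inl h)
  have hni2 : q.2 ∉ PS θ := fun h => hni (Or.inr h)
  have hwm : w ∈ ({q.1, q.2}ᶜ : Set 𝕊) := by
    simp only [mem_compl_iff, mem_insert_iff, mem_singleton_iff, not_or]
    exact ⟨fun e => hni1 (e ▸ hw), fun e => hni2 (e ▸ hw)⟩
  by_contra hcon
  exact hns ⟨hne, w0, hw0, w, hw, hw0m, hwm, hcon⟩

/-- Matching two interval representations of the same unordered pair on the circle. -/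
lemma matching {x y : 𝕊} {u v u' v' : ℝ}
    (m1 : (x = (u : 𝕊) ∧ y = (v : 𝕊)) ∨ (x = (v : 𝕊) ∧ y = (u : 𝕊)))
    (m2 : (x = (u' : 𝕊) ∧ y = (v' : 𝕊)) ∨ (x = (v' : 𝕊) ∧ y = (u' : 𝕊)))
    (g1 : 0 < v - u) (g1' : v - u < 1) (g2 : 0 < v' - u') (g2' : v' - u' < 1) :
    (v - u = v' - u' ∧ arcO u' v' = arcO u v ∧ carc u' v' = carc u v) ∨
    arcO u' v' = arcO v (u + 1) := by
  have key : ((u : 𝕊) = (u' : 𝕊) ∧ (v : 𝕊) = (v' : 𝕊)) ∨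
      ((u : 𝕊) = (v' : 𝕊) ∧ (v : 𝕊) = (u' : 𝕊)) := by
    rcases m1 with ⟨e1, e2⟩ | ⟨e1, e2⟩ <;> rcases m2 with ⟨f1, f2⟩ | ⟨f1, f2⟩
    · exact Or.inl ⟨e1 ▸ f1, e2 ▸ f2⟩
    · exact Or.inr ⟨e1 ▸ f1, e2 ▸ f2⟩
    · exact Or.inr ⟨e2 ▸ f2, e1 ▸ f1⟩
    · exact Or.inl ⟨e2 ▸ f2, e1 ▸ f1⟩
  rcases key with ⟨e1, e2⟩ | ⟨e1, e2⟩
  · left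
    obtain ⟨j, hj⟩ := pi_eq_iff.mp e1
    obtain ⟨k, hk⟩ := pi_eq_iff.mp e2
    have hjk : j = k := by
      have h1 : ((k : ℝ) - j : ℝ) < 1 := by linarith
      have h2 : (-1 : ℝ) < (k : ℝ) - j := by linarith
      have h1' : (k - j : ℤ) < 1 := by exact_mod_cast (by push_cast; linarith : ((k - j : ℤ) : ℝ) < 1)
      have h2' : (-1 : ℤ) < k - j := by exact_mod_cast (by push_cast; linarith : ((-1 : ℤ) : ℝ) < ((k - j : ℤ) : ℝ))
      omega
    subst hjk
    have hu' : u' = u + j := hj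
    have hv' : v' = v + j := hk
    subst hu'; subst hv'
    refine ⟨by ring, arc_translate j, ?_⟩
    apply subset_antisymm
    · rintro _ ⟨t, ht, rfl⟩
      exact ⟨t - j, ⟨by linarith [ht.1], by linarith [ht.2]⟩,
        pi_eq_iff.mpr ⟨j, by push_cast; ring⟩⟩
    · rintro _ ⟨t, ht, rfl⟩
      exact ⟨t + j, ⟨by linarith [ht.1], by linarith [ht.2]⟩,
        (pi_eq_iff.mpr ⟨j, by push_cast; ring⟩).symm⟩
  · right
    obtain ⟨j, hj⟩ := pi_eq_iff.mp e1   -- v' = u + j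
    obtain ⟨k, hk⟩ := pi_eq_iff.mp e2   -- u' = v + k
    have hjk : j = k + 1 := by
      have h1 : (0 : ℝ) < (j : ℝ) - k := by linarith
      have h2 : ((j : ℝ) - k : ℝ) < 2 := by linarith
      have h1' : (0 : ℤ) < j - k := by exact_mod_cast (by push_cast; linarith : ((0 : ℤ) : ℝ) < ((j - k : ℤ) : ℝ))
      have h2' : (j - k : ℤ) < 2 := by exact_mod_cast (by push_cast; linarith : ((j - k : ℤ) : ℝ) < ((2 : ℤ) : ℝ))
      omega
    have hu' : u' = v + k := hk
    have hv' : v' = (u + 1) + k := by rw [hj, hjk]; push_cast; ring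
    rw [hu', hv']
    exact arc_translate k

lemma not_pi_st {s t : ℝ} (h1 : s < t) (h2 : t < s + 1 / 2) :
    (t : 𝕊) ≠ (s : 𝕊) ∧ (t : 𝕊) ≠ ((s + 1 / 2 : ℝ) : 𝕊) := by
  constructor
  · intro e
    obtain ⟨k, hk⟩ := pi_eq_iff.mp e
    have h3 : (-1 : ℝ) < k := by linarith
    have h4 : (k : ℝ) < 0 := by linarith
    have : (-1 : ℤ) < k := by exact_mod_cast h3
    have : k < 0 := by exact_mod_cast h4
    omega
  · intro e
    obtain ⟨k, hk⟩ := pi_eq_iff.mp e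
    have h3 : (0 : ℝ) < k := by linarith
    have h4 : (k : ℝ) < 1 := by linarith
    have : (0 : ℤ) < k := by exact_mod_cast h3
    have : k < 1 := by exact_mod_cast h4
    omega

lemma key_helper {θ : ℝ} {q : 𝕋} {s r1 r2 : ℝ}
    (hs : ({((θ / 2 : ℝ) : 𝕊), (((θ + 1) / 2 : ℝ) : 𝕊)} : Set 𝕊)
        = {(s : 𝕊), ((s + 1 / 2 : ℝ) : 𝕊)})
    (hr1 : r1 ∈ Icc s (s + 1 / 2)) (hr2 : r2 ∈ Icc s (s + 1 / 2))
    (hm : (q.1 = (r1 : 𝕊) ∧ q.2 = (r2 : 𝕊)) ∨ (q.1 = (r2 : 𝕊) ∧ q.2 = (r1 : 𝕊)))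
    (hord : r1 ≤ r2)
    (hne : q.1 ≠ q.2) (hni : ¬ IntP θ q) (hns : ¬ SepP θ q) :
    ∃ u v : ℝ,
      ((q.1 = (u : 𝕊) ∧ q.2 = (v : 𝕊)) ∨ (q.1 = (v : 𝕊) ∧ q.2 = (u : 𝕊))) ∧
      0 < v - u ∧ v - u < 1 / 2 ∧
      (∀ w ∈ PS θ, w ∉ carc u v) ∧
      (∀ t ∈ Ioo u v, (t : 𝕊) ≠ ((θ / 2 : ℝ) : 𝕊) ∧ (t : 𝕊) ≠ (((θ + 1) / 2 : ℝ) : 𝕊)) := by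
  have hni1 : q.1 ∉ PS θ := fun h => hni (Or.inl h)
  have hni2 : q.2 ∉ PS θ := fun h => hni (Or.inr h)
  have hr1_mem : (r1 : 𝕊) = q.1 ∨ (r1 : 𝕊) = q.2 := by
    rcases hm with ⟨e1, _⟩ | ⟨_, e2⟩
    · exact Or.inl e1.symm
    · exact Or.inr e2.symm
  have hr2_mem : (r2 : 𝕊) = q.1 ∨ (r2 : 𝕊) = q.2 := by
    rcases hm with ⟨_, e2⟩ | ⟨e1, _⟩
    · exact Or.inr e2.symm
    · exact Or.inl e1.symm
  have hr1_PS : (r1 : 𝕊) ∉ PS θ := by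
    rcases hr1_mem with e | e <;> rw [e] <;> assumption
  have hr2_PS : (r2 : 𝕊) ∉ PS θ := by
    rcases hr2_mem with e | e <;> rw [e] <;> assumption
  have hht_pair : halfTheta θ = (s : 𝕊) ∨ halfTheta θ = ((s + 1 / 2 : ℝ) : 𝕊) := by
    have hmem : halfTheta θ ∈ ({(s : 𝕊), ((s + 1 / 2 : ℝ) : 𝕊)} : Set 𝕊) := by
      rw [← hs]
      rcases halfTheta_cases θ with h | h <;> rw [h]
      · exact Set.mem_insert _ _
      · exact Set.mem_insert_of_mem _ rfl
    simpa using hmem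
  -- strict inequality r1 < r2
  have hlt : r1 < r2 := by
    rcases eq_or_lt_of_le hord with h | h
    · exfalso
      apply hne
      rcases hm with ⟨e1, e2⟩ | ⟨e1, e2⟩ <;> rw [e1, e2, h]
    · exact h
  -- gap < 1/2
  have hhalf : r2 - r1 < 1 / 2 := by
    rcases lt_or_ge (r2 - r1) (1 / 2) with h | h
    · exact h
    · exfalso
      have e1 : r1 = s := by linarith [hr1.1, hr2.2]
      have e2 : r2 = s + 1 / 2 := by linarith [hr1.1, hr2.2]
      rcases hht_pair with h' | h'
      · exact hr1_PS (by rw [e1, ← h']; exact halfTheta_PS θ)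
      · exact hr2_PS (by rw [e2, ← h']; exact halfTheta_PS θ)
  have h2 : r2 < r1 + 1 := by linarith
  -- halfTheta lies in the outer arc
  have hht_outer : halfTheta θ ∈ arcO r2 (r1 + 1) := by
    rcases hht_pair with h | h
    · have hs_lt : s < r1 := by
        rcases eq_or_lt_of_le hr1.1 with e | e
        · exfalso; exact hr1_PS (by rw [← e, ← h]; exact halfTheta_PS θ)
        · exact e
      exact ⟨s + 1, ⟨by linarith [hr2.2], by linarith⟩, by show ((s + 1 : ℝ) : 𝕊) = halfTheta θ; rw [pi_add_one s]; exact h.symm⟩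
    · have hr2_lt : r2 < s + 1 / 2 := by
        rcases eq_or_lt_of_le hr2.2 with e | e
        · exfalso; exact hr2_PS (by rw [e, ← h]; exact halfTheta_PS θ)
        · exact e
      exact ⟨s + 1 / 2, ⟨hr2_lt, by linarith [hr1.1]⟩, h.symm⟩
  have hpair_eq : ({q.1, q.2} : Set 𝕊) = {((r1 : ℝ) : 𝕊), ((r2 : ℝ) : 𝕊)} := by
    rcases hm with ⟨e1, e2⟩ | ⟨e1, e2⟩ <;> rw [e1, e2]
    exact Set.pair_comm _ _
  have harcAt : arcAt q.1 q.2 (halfTheta θ) = arcO r2 (r1 + 1) := by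
    unfold arcAt
    rw [hpair_eq]
    exact connectedComponentIn_arc' hlt h2 hht_outer
  have hw0m : halfTheta θ ∈ ({q.1, q.2}ᶜ : Set 𝕊) := by
    simp only [mem_compl_iff, mem_insert_iff, mem_singleton_iff, not_or]
    constructor
    · intro e; exact hni1 (by rw [← e]; exact halfTheta_PS θ)
    · intro e; exact hni2 (by rw [← e]; exact halfTheta_PS θ)
  have hall : ∀ w ∈ PS θ, w ∈ arcO r2 (r1 + 1) := by
    intro w hw
    have := sep_forall hne hns hni (halfTheta_PS θ) hw0m w hw
    rwa [harcAt] at this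
  refine ⟨r1, r2, hm, by linarith, hhalf, ?_, ?_⟩
  · intro w hw hwc
    rcases carc_cases hwc with e | e | e
    · exact hr1_PS (e ▸ hw)
    · exact hr2_PS (e ▸ hw)
    · exact (arc_disjoint hlt h2).le_bot ⟨e, hall w hw⟩
  · intro t ht
    have hts : s < t := lt_of_le_of_lt hr1.1 ht.1
    have hts2 : t < s + 1 / 2 := lt_of_lt_of_le ht.2 hr2.2
    have hA_mem : ((θ / 2 : ℝ) : 𝕊) = (s : 𝕊) ∨ ((θ / 2 : ℝ) : 𝕊) = ((s + 1 / 2 : ℝ) : 𝕊) := by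
      have : ((θ / 2 : ℝ) : 𝕊) ∈ ({(s : 𝕊), ((s + 1 / 2 : ℝ) : 𝕊)} : Set 𝕊) := by
        rw [← hs]; exact Set.mem_insert _ _
      simpa using this
    have hB_mem : (((θ + 1) / 2 : ℝ) : 𝕊) = (s : 𝕊) ∨
        (((θ + 1) / 2 : ℝ) : 𝕊) = ((s + 1 / 2 : ℝ) : 𝕊) := by
      have : (((θ + 1) / 2 : ℝ) : 𝕊) ∈ ({(s : 𝕊), ((s + 1 / 2 : ℝ) : 𝕊)} : Set 𝕊) := by
        rw [← hs]; exact Set.mem_insert_of_mem _ rfl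
      simpa using this
    constructor
    · rcases hA_mem with e | e <;> rw [e]
      · exact (not_pi_st hts hts2).1
      · exact (not_pi_st hts hts2).2
    · rcases hB_mem with e | e <;> rw [e]
      · exact (not_pi_st hts hts2).1
      · exact (not_pi_st hts hts2).2

lemma key_lemma {θ : ℝ} {q : 𝕋}
    (hC : q ∈ Creg θ) (hne : q.1 ≠ q.2) (hni : ¬ IntP θ q) (hns : ¬ SepP θ q) :
    ∃ u v : ℝ,
      ((q.1 = (u : 𝕊) ∧ q.2 = (v : 𝕊)) ∨ (q.1 = (v : 𝕊) ∧ q.2 = (u : 𝕊))) ∧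
      0 < v - u ∧ v - u < 1 / 2 ∧
      (∀ w ∈ PS θ, w ∉ carc u v) ∧
      (∀ t ∈ Ioo u v, (t : 𝕊) ≠ ((θ / 2 : ℝ) : 𝕊) ∧ (t : 𝕊) ≠ (((θ + 1) / 2 : ℝ) : 𝕊)) := by
  have main : ∀ s : ℝ,
      ({((θ / 2 : ℝ) : 𝕊), (((θ + 1) / 2 : ℝ) : 𝕊)} : Set 𝕊) = {(s : 𝕊), ((s + 1 / 2 : ℝ) : 𝕊)} →
      q.1 ∈ carc s (s + 1 / 2) → q.2 ∈ carc s (s + 1 / 2) →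
      ∃ u v : ℝ,
        ((q.1 = (u : 𝕊) ∧ q.2 = (v : 𝕊)) ∨ (q.1 = (v : 𝕊) ∧ q.2 = (u : 𝕊))) ∧
        0 < v - u ∧ v - u < 1 / 2 ∧
        (∀ w ∈ PS θ, w ∉ carc u v) ∧
        (∀ t ∈ Ioo u v, (t : 𝕊) ≠ ((θ / 2 : ℝ) : 𝕊) ∧ (t : 𝕊) ≠ (((θ + 1) / 2 : ℝ) : 𝕊)) := by
    intro s hs h1 h2
    obtain ⟨r1, hr1, e1⟩ := h1
    obtain ⟨r2, hr2, e2⟩ := h2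
    rcases le_total r1 r2 with hord | hord
    · exact key_helper hs hr1 hr2 (Or.inl ⟨e1.symm, e2.symm⟩) hord hne hni hns
    · exact key_helper hs hr2 hr1 (Or.inr ⟨e1.symm, e2.symm⟩) hord hne hni hns
  rcases hC with ⟨h1, h2⟩ | ⟨h1, h2⟩
  · exact main (θ / 2) (pair_set_eq θ) h1 h2
  · have hrw : carc (θ / 2 + 1 / 2) (θ / 2 + 1) = carc (θ / 2 + 1 / 2) ((θ / 2 + 1 / 2) + 1 / 2) := by
      rw [show ((θ / 2 + 1 / 2) + 1 / 2 : ℝ) = θ / 2 + 1 by ring]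
    have hs2 : ({((θ / 2 : ℝ) : 𝕊), (((θ + 1) / 2 : ℝ) : 𝕊)} : Set 𝕊)
        = {((θ / 2 + 1 / 2 : ℝ) : 𝕊), (((θ / 2 + 1 / 2) + 1 / 2 : ℝ) : 𝕊)} := by
      rw [show ((θ / 2 + 1 / 2) + 1 / 2 : ℝ) = θ / 2 + 1 by ring, pi_add_one, B_shift θ]
      exact Set.pair_comm _ _
    rw [hrw] at h1 h2
    exact main (θ / 2 + 1 / 2) hs2 h1 h2

end Aux

/-- For rational `θ ∈ (ℝ/ℤ) ∖ {0}` (with representative `θ̂ ∈ (0,1)`),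
the set `X_θ` is an attracting core of `L_θ`: `X_θ ⊆ L_θ`, and every point of `L_θ`
reaches `X_θ` under some forward iterate of `F`. -/
theorem Xset_attracting_core (θ : ℝ) (hθ : θ ∈ Ioo (0 : ℝ) 1)
    (hrat : ∃ q : ℚ, (q : ℝ) = θ) :
    Xset θ ⊆ Lset θ ∧ ∀ p ∈ Lset θ, ∃ n : ℕ, F^[n] p ∈ Xset θ := by
  constructor
  · exact fun p hp => hp.1
  intro p hp
  by_contra hcon
  push_neg at hcon
  -- from non-membership in Xset, extract the negations
  have not_xs : ∀ q : 𝕋, q ∈ Lset θ → q ∉ Xset θ → ¬ SepP θ q ∧ ¬ IntP θ q := by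
    intro q hq hnx
    constructor
    · exact fun hs => hnx ⟨hq, Or.inl hs⟩
    · exact fun hi => hnx ⟨hq, Or.inr hi⟩
  -- base data
  have hx0 : p ∉ Xset θ := by
    have := hcon 0
    rwa [Function.iterate_zero_apply] at this
  obtain ⟨hns0, hni0⟩ := not_xs p hp hx0
  obtain ⟨u0, v0, hm0, hpos0, hlt0, hPS0, hab0⟩ :=
    key_lemma (Lset_subset_Creg θ hp) hp.2 hni0 hns0
  set c0 : ℝ := v0 - u0 with hc0_def
  have hc0 : 0 < c0 := hpos0
  -- the doubling induction
  have ind : ∀ n : ℕ, ∃ u v : ℝ, F^[n] p ∈ Lset θ ∧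
      (((F^[n] p).1 = (u : 𝕊) ∧ (F^[n] p).2 = (v : 𝕊)) ∨
        ((F^[n] p).1 = (v : 𝕊) ∧ (F^[n] p).2 = (u : 𝕊))) ∧
      v - u = 2 ^ n * c0 ∧ v - u < 1 / 2 ∧
      (∀ w ∈ PS θ, w ∉ carc u v) ∧
      (∀ t ∈ Ioo u v, (t : 𝕊) ≠ ((θ / 2 : ℝ) : 𝕊) ∧ (t : 𝕊) ≠ (((θ + 1) / 2 : ℝ) : 𝕊)) := by
    intro n
    induction n with
    | zero =>
      refine ⟨u0, v0, ?_, ?_, by rw [pow_zero, one_mul], hlt0, hPS0, hab0⟩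
      · rwa [Function.iterate_zero_apply]
      · rw [Function.iterate_zero_apply]; exact hm0
    | succ n ih =>
      obtain ⟨u, v, hL, hm, hgap, hlt, hPS, hab⟩ := ih
      have hgap_pos : 0 < v - u := by
        rw [hgap]; exact mul_pos (pow_pos two_pos n) hc0
      have hsucc : F^[n+1] p = F (F^[n] p) := Function.iterate_succ_apply' F n p
      set q : 𝕋 := F^[n] p with hq_def
      -- coordinates of F q
      have hm' : ((F q).1 = ((2 * u : ℝ) : 𝕊) ∧ (F q).2 = ((2 * v : ℝ) : 𝕊)) ∨
          ((F q).1 = ((2 * v : ℝ) : 𝕊) ∧ (F q).2 = ((2 * u : ℝ) : 𝕊)) := by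
        rcases hm with ⟨e1, e2⟩ | ⟨e1, e2⟩
        · left
          constructor
          · show dbl q.1 = _
            rw [e1, dbl_pi]
          · show dbl q.2 = _
            rw [e2, dbl_pi]
        · right
          constructor
          · show dbl q.1 = _
            rw [e1, dbl_pi]
          · show dbl q.2 = _
            rw [e2, dbl_pi]
      have hlt2u : 2 * u < 2 * v := by linarith
      have hlt2u1 : 2 * v < 2 * u + 1 := by linarith
      have hpi_ne : ((2 * u : ℝ) : 𝕊) ≠ ((2 * v : ℝ) : 𝕊) := by
        intro h
        obtain ⟨k, hk⟩ := pi_eq_iff.mp h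
        have h3 : (0 : ℝ) < k := by linarith
        have h4 : (k : ℝ) < 1 := by linarith
        have : (0 : ℤ) < k := by exact_mod_cast h3
        have : k < 1 := by exact_mod_cast h4
        omega
      have hne' : (F q).1 ≠ (F q).2 := by
        intro h
        rcases hm' with ⟨e1, e2⟩ | ⟨e1, e2⟩
        · exact hpi_ne (by rw [← e1, ← e2, h])
        · exact hpi_ne (by rw [← e1, ← e2, h.symm])
      have hL' : F q ∈ Lset θ := Lset_invariant hL hne'
      have hnx := hcon (n + 1)
      rw [hsucc] at hnx
      obtain ⟨hns', hni'⟩ := not_xs _ hL' hnx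
      -- θ does not lie in the doubled inner arc
      have hth_not_inner : ((θ : ℝ) : 𝕊) ∉ arcO (2 * u) (2 * v) := by
        rintro ⟨t, ht, hte⟩
        have hd : dbl ((t / 2 : ℝ) : 𝕊) = ((θ : ℝ) : 𝕊) := by
          rw [dbl_pi, show (2 * (t / 2) : ℝ) = t by ring]
          exact hte
        have htmem : t / 2 ∈ Ioo u v := ⟨by linarith [ht.1], by linarith [ht.2]⟩
        rcases dbl_preimage_theta hd with e | e
        · exact (hab (t / 2) htmem).1 e
        · exact (hab (t / 2) htmem).2 e
      have hth_ne1 : ((θ : ℝ) : 𝕊) ≠ (F q).1 := by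
        intro e
        exact hni' (Or.inl (e ▸ theta_PS θ))
      have hth_ne2 : ((θ : ℝ) : 𝕊) ≠ (F q).2 := by
        intro e
        exact hni' (Or.inr (e ▸ theta_PS θ))
      -- θ lies in the outer arc
      have hth_outer : ((θ : ℝ) : 𝕊) ∈ arcO (2 * v) (2 * u + 1) := by
        rcases circle_partition hlt2u hlt2u1 ((θ : ℝ) : 𝕊) with e | e | e | e
        · exfalso
          rcases hm' with ⟨e1, _⟩ | ⟨_, e2⟩
          · exact hth_ne1 (by rw [e1]; exact e)
          · exact hth_ne2 (by rw [e2]; exact e)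
        · exfalso
          rcases hm' with ⟨_, e2⟩ | ⟨e1, _⟩
          · exact hth_ne2 (by rw [e2]; exact e)
          · exact hth_ne1 (by rw [e1]; exact e)
        · exact absurd e hth_not_inner
        · exact e
      have hpair' : ({(F q).1, (F q).2} : Set 𝕊) = {((2 * u : ℝ) : 𝕊), ((2 * v : ℝ) : 𝕊)} := by
        rcases hm' with ⟨e1, e2⟩ | ⟨e1, e2⟩ <;> rw [e1, e2]
        exact Set.pair_comm _ _
      have harcAt' : arcAt (F q).1 (F q).2 ((θ : ℝ) : 𝕊) = arcO (2 * v) (2 * u + 1) := by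
        unfold arcAt
        rw [hpair']
        exact connectedComponentIn_arc' hlt2u hlt2u1 hth_outer
      have hw0m' : ((θ : ℝ) : 𝕊) ∈ ({(F q).1, (F q).2}ᶜ : Set 𝕊) := by
        simp only [mem_compl_iff, mem_insert_iff, mem_singleton_iff, not_or]
        exact ⟨hth_ne1, hth_ne2⟩
      have hall' : ∀ w ∈ PS θ, w ∈ arcO (2 * v) (2 * u + 1) := by
        intro w hw
        have := sep_forall hne' hns' hni' (theta_PS θ) hw0m' w hw
        rwa [harcAt'] at this
      -- apply the key lemma to F q
      obtain ⟨u', v', hm'', hpos'', hlt'', hPS'', hab''⟩ :=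
        key_lemma (Lset_subset_Creg θ hL') hne' hni' hns'
      rcases matching hm' hm'' (by linarith) (by linarith) hpos'' (by linarith)
        with ⟨hgap_eq, hao, hac⟩ | hcross
      · refine ⟨u', v', ?_, ?_, ?_, hlt'', hPS'', hab''⟩
        · rw [hsucc]; exact hL'
        · rw [hsucc]; exact hm''
        · calc v' - u' = 2 * v - 2 * u := hgap_eq.symm
            _ = 2 * (v - u) := by ring
            _ = 2 * (2 ^ n * c0) := by rw [hgap]
            _ = 2 ^ (n + 1) * c0 := by rw [pow_succ]; ring
      · exfalso
        have hθ_in : ((θ : ℝ) : 𝕊) ∈ arcO u' v' := by rw [hcross]; exact hth_outer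
        exact hPS'' _ (theta_PS θ) (arcO_subset_carc hθ_in)
  -- final contradiction by Archimedes
  obtain ⟨n, hn⟩ := pow_unbounded_of_one_lt (R := ℝ) (1 / (2 * c0)) one_lt_two
  obtain ⟨u, v, _, _, hgap, hlt, _, _⟩ := ind n
  have h1 : (2 : ℝ) ^ n * c0 < 1 / 2 := by rw [← hgap]; exact hlt
  have h2 : (0 : ℝ) < 2 * c0 := by linarith
  rw [div_lt_iff₀ h2] at hn
  have h3 : (1 : ℝ) < 2 ^ n * (2 * c0) := by linarith
  nlinarith
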